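/- Let w_1, …, w_m be linearly independent linear forms in B with span W, let S be a system of line representatives for W, and for each j let W_j be the span of {w_1,…,w_m} \ {w_j} and Δ_j := ∏_{w ∈ S, w ∉ W_j} w. Let D be the diagonal m×m matrix with D_{jj} = Δ_j. Then there exists a matrix U ∈ M_m(B) such that U · M(w_1,…,w_m) = D. -/

import Mathlib

open MvPolynomial

/-- The linear form `Σ_i v_i X_i` in `B = (ZMod p)[X_1, …, X_m]` associated to a
coefficient vector `v : Fin m → ZMod p`. -/
noncomputable def linForm (p m : ℕ) (v : Fin m → ZMod p) :
    MvPolynomial (Fin m) (ZMod p) :=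
  ∑ i : Fin m, MvPolynomial.C (v i) * MvPolynomial.X i

/-- A system of line representatives for a subspace `W` of an `𝔽_p`-module:
a finite set of nonzero elements of `W` such that every nonzero element of `W`
is a scalar multiple of exactly one element of the set. -/
def IsLineReps {p : ℕ} {M : Type*} [AddCommGroup M] [Module (ZMod p) M]
    (W : Submodule (ZMod p) M) (S : Finset M) : Prop :=
  (∀ w ∈ S, w ∈ W ∧ w ≠ 0) ∧
    ∀ w ∈ W, w ≠ 0 → ∃! u, u ∈ S ∧ ∃ c : ZMod p, w = c • u


open Polynomial in
theorem prodXsubC (p : ℕ) [Fact p.Prime] :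
    ∏ a : ZMod p, (Polynomial.X - Polynomial.C a) = Polynomial.X ^ p - Polynomial.X := by
  have hp1 : 1 < p := (Fact.out : p.Prime).one_lt
  have h := FiniteField.roots_X_pow_card_sub_X (ZMod p)
  rw [ZMod.card] at h
  have hm : (Polynomial.X ^ p - Polynomial.X : Polynomial (ZMod p)).Monic := by
    apply Polynomial.monic_X_pow_sub
    simpa using hp1
  have := Polynomial.prod_multiset_X_sub_C_of_monic_of_roots_card_eq hm ?_
  · rw [h] at this
    rw [← this, Finset.prod_eq_multiset_prod]
  · rw [h]
    simp [FiniteField.X_pow_card_sub_X_natDegree_eq (ZMod p) hp1]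

theorem lemA_field (p : ℕ) [Fact p.Prime] {F : Type*} [Field F] (f : ZMod p →+* F) (x y : F) :
    ∏ c : ZMod p, (x - f c * y) = x ^ p - y ^ (p - 1) * x := by
  have hp1 : 1 < p := (Fact.out : p.Prime).one_lt
  have hcard : Fintype.card (ZMod p) = p := ZMod.card p
  rcases eq_or_ne y 0 with rfl | hy
  · simp only [mul_zero, sub_zero, Finset.prod_const, Finset.card_univ, hcard]
    rw [zero_pow (by omega), zero_mul, sub_zero]
  · have key : ∏ c : ZMod p, ((x / y) - f c) = (x/y)^p - (x/y) := by
      have := congrArg (Polynomial.eval₂RingHom f (x/y)) (prodXsubC p)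
      simpa using this
    have h1 : ∀ c : ZMod p, x - f c * y = y * (x/y - f c) := by
      intro c; field_simp
    calc ∏ c : ZMod p, (x - f c * y) = ∏ c : ZMod p, (y * (x/y - f c)) :=
          Finset.prod_congr rfl fun c _ => h1 c
      _ = y ^ p * ∏ c : ZMod p, (x/y - f c) := by
          rw [Finset.prod_mul_distrib, Finset.prod_const, Finset.card_univ, hcard]
      _ = y ^ p * ((x/y)^p - (x/y)) := by rw [key]
      _ = x ^ p - y ^ (p - 1) * x := by
          have hyp : y ^ p = y ^ (p-1) * y := by
            rw [← pow_succ]; congr 1; omega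
          rw [div_pow, mul_sub, mul_div_cancel₀ _ (pow_ne_zero p hy), hyp, mul_assoc,
            mul_div_cancel₀ _ hy]

theorem lemA (p : ℕ) [Fact p.Prime] {R : Type*} [CommRing R] (f : ZMod p →+* R) (x y : R) :
    ∏ c : ZMod p, (x - f c * y) = x ^ p - y ^ (p - 1) * x := by
  set D := MvPolynomial (Fin 2) (ZMod p)
  set K := FractionRing D
  have hD : ∏ c : ZMod p, (MvPolynomial.X 0 - MvPolynomial.C c * MvPolynomial.X 1 : D)
      = (MvPolynomial.X 0 : D) ^ p - (MvPolynomial.X 1 : D) ^ (p-1) * MvPolynomial.X 0 := by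
    apply IsFractionRing.injective D K
    have := lemA_field p ((algebraMap D K).comp (MvPolynomial.C))
      (algebraMap D K (MvPolynomial.X 0)) (algebraMap D K (MvPolynomial.X 1))
    simpa [map_prod, map_sub, map_mul, map_pow] using this
  have := congrArg (MvPolynomial.eval₂Hom f ![x, y]) hD
  simpa [map_prod, map_sub, map_mul, map_pow] using this
section
variable (p : ℕ) [Fact p.Prime] {m : ℕ}

local notation "B" => MvPolynomial (Fin m) (ZMod p)

theorem psi_ppoly :
    ∀ (n : ℕ) (g : Fin n → B),
      LinearIndependent (ZMod p) g →
      ∀ (T : Finset B),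
        (↑T : Set B) = ↑(Submodule.span (ZMod p) (Set.range g)) →
        ∃ a : Fin (n+1) → B,
          ∀ t, ∏ u ∈ T, (t - u) = ∑ k : Fin (n+1), a k * t ^ p ^ (k : ℕ) := by
  intro n
  induction n with
  | zero =>
    intro g hg T hT
    have hT0 : T = {0} := by
      rw [← Finset.coe_inj, hT]
      rw [Set.range_eq_empty g, Submodule.span_empty, Submodule.bot_coe]
      simp
    subst hT0
    exact ⟨fun _ => 1, fun t => by simp⟩
  | succ n ih =>
    classical
    intro g hg T hT
    haveI : ExpChar B p := by
      have : CharP B p := by infer_instance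
      exact ExpChar.prime (Fact.out : p.Prime)
    set g' : Fin n → B := fun k => g k.castSucc with hg'def
    set u : B := g (Fin.last n) with hudef
    have hsnoc : Fin.snoc g' u = g := Fin.snoc_init_self g
    have hgi : LinearIndependent (ZMod p) g'
        ∧ u ∉ Submodule.span (ZMod p) (Set.range g') := by
      rw [← linearIndependent_fin_snoc]; rwa [hsnoc]
    obtain ⟨hg', hu⟩ := hgi
    set V' := Submodule.span (ZMod p) (Set.range g') with hV'
    haveI : Module.Finite (ZMod p) V' :=
      FiniteDimensional.span_of_finite _ (Set.finite_range g')
    haveI : Finite V' := Module.finite_of_finite (ZMod p)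
    have hfin : (↑V' : Set B).Finite := V'.carrier.toFinite
    set T' : Finset B := hfin.toFinset with hT'def
    have hT' : (↑T' : Set B) = ↑V' := hfin.coe_toFinset
    obtain ⟨a, ha⟩ := ih g' hg' T' hT'
    set ψ : B → B := fun t => ∑ k : Fin (n+1), a k * t ^ p ^ (k : ℕ) with hψ
    have hψlin : ∀ (t : B) (c : ZMod p), ψ (t - c • u) = ψ t - c • ψ u := by
      intro t c
      have hterm : ∀ k : Fin (n+1), a k * (t - c • u) ^ p ^ (k : ℕ)
          = a k * t ^ p ^ (k : ℕ) - c • (a k * u ^ p ^ (k : ℕ)) := by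
        intro k
        rw [sub_pow_char_pow, smul_pow, ZMod.pow_card_pow, mul_sub, mul_smul_comm]
      simp only [hψ, hterm, Finset.sum_sub_distrib, Finset.smul_sum]
    have hmemT : ∀ x : B, x ∈ T ↔ x ∈ Submodule.span (ZMod p) (Set.range g) := by
      intro x
      rw [← Finset.mem_coe, hT, SetLike.mem_coe]
    have hmemT' : ∀ x : B, x ∈ T' ↔ x ∈ V' := by
      intro x
      rw [← Finset.mem_coe, hT', SetLike.mem_coe]
    have hrange : Set.range g = insert u (Set.range g') := by
      ext x
      constructor
      · rintro ⟨i, rfl⟩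
        rcases Fin.eq_castSucc_or_eq_last i with ⟨k, rfl⟩ | rfl
        · exact Set.mem_insert_of_mem _ ⟨k, rfl⟩
        · exact Set.mem_insert _ _
      · rintro (rfl | ⟨k, rfl⟩)
        · exact ⟨Fin.last n, rfl⟩
        · exact ⟨k.castSucc, rfl⟩
    have hspan : ∀ x : B, x ∈ Submodule.span (ZMod p) (Set.range g)
        ↔ ∃ c : ZMod p, ∃ y ∈ V', x = c • u + y := by
      intro x
      rw [hrange, Submodule.mem_span_insert]
    have hinj' : ∀ c1 c2 : ZMod p, ∀ y1 y2 : B, y1 ∈ V' → y2 ∈ V' →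
        c1 • u + y1 = c2 • u + y2 → c1 = c2 ∧ y1 = y2 := by
      intro c1 c2 y1 y2 h1 h2 heq
      have hc : c1 = c2 := by
        by_contra hne
        apply hu
        have h3 : (c1 - c2) • u = y2 - y1 := by
          rw [sub_smul, sub_eq_sub_iff_add_eq_add, add_comm y2 (c2 • u)]
          exact heq
        have h4 : u = (c1 - c2)⁻¹ • (y2 - y1) := by
          rw [← h3, smul_smul, inv_mul_cancel₀ (sub_ne_zero.mpr hne), one_smul]
        rw [h4]
        exact Submodule.smul_mem _ _ (Submodule.sub_mem _ h2 h1)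
      subst hc
      exact ⟨rfl, by exact add_left_cancel heq⟩
    have hstep : ∀ t : B, ∏ x ∈ T, (t - x)
        = ∏ cy ∈ (Finset.univ : Finset (ZMod p)) ×ˢ T', (t - (cy.1 • u + cy.2)) := by
      intro t
      refine (Finset.prod_bij (fun (cy : ZMod p × _) _ => cy.1 • u + cy.2) ?_ ?_ ?_ ?_).symm
      · intro cy hcy
        rw [hmemT, hspan]
        exact ⟨cy.1, cy.2, (hmemT' _).1 (Finset.mem_product.1 hcy).2, rfl⟩
      · intro a1 h1 a2 h2 heq
        obtain ⟨hc, hy⟩ := hinj' a1.1 a2.1 a1.2 a2.2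
          ((hmemT' _).1 (Finset.mem_product.1 h1).2)
          ((hmemT' _).1 (Finset.mem_product.1 h2).2) heq
        exact Prod.ext hc hy
      · intro x hx
        obtain ⟨c, y, hy, rfl⟩ := (hspan x).1 ((hmemT x).1 hx)
        exact ⟨(c, y), Finset.mem_product.2 ⟨Finset.mem_univ _, (hmemT' y).2 hy⟩, rfl⟩
      · intro cy _; rfl
    have hprod : ∀ t : B, ∏ x ∈ T, (t - x) = ∏ c : ZMod p, ψ (t - c • u) := by
      intro t
      rw [hstep t, Finset.prod_product]
      refine Finset.prod_congr rfl fun c _ => ?_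
      simp only [hψ]
      rw [← ha (t - c • u)]
      refine Finset.prod_congr rfl fun y _ => ?_
      ring
    have hmain : ∀ t : B, ∏ x ∈ T, (t - x) = ψ t ^ p - ψ u ^ (p-1) * ψ t := by
      intro t
      rw [hprod t]
      have hcform : ∀ c : ZMod p, ψ (t - c • u)
          = ψ t - (MvPolynomial.C : ZMod p →+* B) c * ψ u := by
        intro c
        rw [hψlin t c, MvPolynomial.smul_eq_C_mul]
      rw [Finset.prod_congr rfl fun c _ => hcform c]
      exact lemA p (MvPolynomial.C : ZMod p →+* B) (ψ t) (ψ u)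
    set e : B := ψ u ^ (p - 1) with he
    set apad : Fin (n+2) → B := Fin.snoc a 0 with hapad
    refine ⟨Fin.cons (-(e * a 0)) (fun k : Fin (n+1) => a k ^ p - e * apad k.succ),
      fun t => ?_⟩
    rw [hmain t]
    rw [Fin.sum_univ_succ]
    simp only [Fin.cons_zero, Fin.cons_succ, Fin.val_succ, Fin.val_zero]
    have hfrob : ψ t ^ p = ∑ k : Fin (n+1), a k ^ p * t ^ p ^ ((k : ℕ)+1) := by
      rw [hψ, sum_pow_char]
      refine Finset.sum_congr rfl fun k _ => ?_
      rw [mul_pow, ← pow_mul, ← pow_succ]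
    have hpsit : ψ t = a 0 * t ^ p ^ (0:ℕ)
        + ∑ k : Fin (n+1), apad k.succ * t ^ p ^ ((k : ℕ)+1) := by
      have hlast : ∑ k : Fin (n+1), apad k.succ * t ^ p ^ ((k : ℕ)+1)
          = ∑ k : Fin n, a k.succ * t ^ p ^ ((k : ℕ)+1) := by
        rw [Fin.sum_univ_castSucc]
        have h0 : apad (Fin.last n).succ = 0 := by
          have : (Fin.last n).succ = Fin.last (n+1) := rfl
          rw [this, hapad, Fin.snoc_last]
        rw [h0, zero_mul, add_zero]
        refine Finset.sum_congr rfl fun k _ => ?_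
        have h1 : (k.castSucc).succ = (k.succ).castSucc := by
          rw [Fin.succ_castSucc]
        rw [h1, hapad, Fin.snoc_castSucc]
        simp
      rw [hlast]
      show ∑ k : Fin (n+1), a k * t ^ p ^ (k : ℕ) = _
      rw [Fin.sum_univ_succ]
      simp [Fin.val_succ]
    rw [hfrob]
    have hre : ∑ k : Fin (n+1), e * (apad k.succ * t ^ p ^ ((k : ℕ)+1))
        = e * ∑ k : Fin (n+1), apad k.succ * t ^ p ^ ((k : ℕ)+1) := by
      rw [Finset.mul_sum]
    calc (∑ k : Fin (n+1), a k ^ p * t ^ p ^ ((k : ℕ)+1)) - e * ψ t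
        = (∑ k : Fin (n+1), a k ^ p * t ^ p ^ ((k : ℕ)+1))
          - e * (a 0 * t ^ p ^ (0:ℕ) + ∑ k : Fin (n+1), apad k.succ * t ^ p ^ ((k : ℕ)+1)) := by
          rw [← hpsit]
      _ = -(e * a 0) * t ^ p ^ (0:ℕ)
          + ∑ k : Fin (n+1), (a k ^ p * t ^ p ^ ((k : ℕ)+1)
            - e * (apad k.succ * t ^ p ^ ((k : ℕ)+1))) := by
          rw [Finset.sum_sub_distrib, hre]; ring
      _ = -(e * a 0) * t ^ p ^ (0:ℕ)
          + ∑ k : Fin (n+1), (a k ^ p - e * apad k.succ) * t ^ p ^ ((k : ℕ)+1) := by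
          congr 1
          refine Finset.sum_congr rfl fun k _ => ?_
          ring
end


open scoped Classical in
/-- with `W_j` the span of the `w_i` for `i ≠ j`,
`Δ_j = ∏_{w ∈ S, w ∉ W_j} w` and `D = diag(Δ_1, …, Δ_m)`, there is a matrix
`U ∈ M_m(B)` with `U · M(w_1,…,w_m) = D`. -/
theorem stmt6 (p m : ℕ) [Fact p.Prime] (hm : 1 ≤ m)
    (v : Fin m → Fin m → ZMod p)
    (hind : LinearIndependent (ZMod p) (fun j => linForm p m (v j)))
    (S : Finset (MvPolynomial (Fin m) (ZMod p)))
    (hS : IsLineReps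
      (Submodule.span (ZMod p) (Set.range fun i => linForm p m (v i))) S) :
    ∃ U : Matrix (Fin m) (Fin m) (MvPolynomial (Fin m) (ZMod p)),
      U * (Matrix.of fun i j : Fin m => (linForm p m (v j)) ^ p ^ (i : ℕ)) =
        Matrix.diagonal (fun j =>
          ∏ w ∈ S.filter (fun w =>
            w ∉ Submodule.span (ZMod p)
              ((fun i => linForm p m (v i)) '' {i | i ≠ j})), w) := by
  obtain ⟨m', rfl⟩ : ∃ m', m = m' + 1 := ⟨m - 1, by omega⟩
  set w : Fin (m'+1) → MvPolynomial (Fin (m'+1)) (ZMod p) :=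
    fun i => linForm p (m'+1) (v i) with hw
  set V : Fin (m'+1) → Submodule (ZMod p) (MvPolynomial (Fin (m'+1)) (ZMod p)) :=
    fun j => Submodule.span (ZMod p) (w '' {i | i ≠ j}) with hV
  have key : ∀ j : Fin (m'+1), ∃ row : Fin (m'+1) → MvPolynomial (Fin (m'+1)) (ZMod p),
      ∀ i : Fin (m'+1), ∑ k : Fin (m'+1), row k * (w i) ^ p ^ (k : ℕ)
        = if i = j then ∏ x ∈ S.filter (fun x => x ∉ V j), x else 0 := by
    intro j
    set g' : Fin m' → MvPolynomial (Fin (m'+1)) (ZMod p) :=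
      fun k => w (j.succAbove k) with hg'
    have hginj : LinearIndependent (ZMod p) g' :=
      hind.comp _ Fin.succAbove_right_injective
    have hrg : Set.range g' = w '' {i | i ≠ j} := by
      have h0 : Set.range g' = w '' Set.range j.succAbove := Set.range_comp w j.succAbove
      rw [h0, Fin.range_succAbove]
      rfl
    have hVeq : Submodule.span (ZMod p) (Set.range g') = V j := by
      rw [hrg, hV]
    have hfinV : ((V j : Set (MvPolynomial (Fin (m'+1)) (ZMod p)))).Finite := by
      haveI : Module.Finite (ZMod p) (V j) := by
        rw [hV]
        exact FiniteDimensional.span_of_finite _ ((Set.toFinite _).image _)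
      haveI : Finite (V j) := Module.finite_of_finite (ZMod p)
      exact (V j : Set (MvPolynomial (Fin (m'+1)) (ZMod p))).toFinite
    set T : Finset (MvPolynomial (Fin (m'+1)) (ZMod p)) := hfinV.toFinset with hTdef
    have hmemT : ∀ x, x ∈ T ↔ x ∈ V j := by
      intro x
      rw [hTdef, Set.Finite.mem_toFinset, SetLike.mem_coe]
    obtain ⟨a, ha⟩ := psi_ppoly p m' g' hginj T (by rw [hfinV.coe_toFinset, hVeq])
    have hwmem : ∀ i, i ≠ j → w i ∈ V j := fun i hi =>
      Submodule.subset_span ⟨i, hi, rfl⟩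
    have hwj : w j ∉ V j := hind.notMem_span_image (by simp)
    have hWmem : ∀ x, x ∈ V j →
        x ∈ Submodule.span (ZMod p) (Set.range fun i => linForm p (m'+1) (v i)) := by
      intro x hx
      refine Submodule.span_mono ?_ hx
      exact Set.image_subset_range _ _
    have hwjW : w j ∈ Submodule.span (ZMod p)
        (Set.range fun i => linForm p (m'+1) (v i)) :=
      Submodule.subset_span ⟨j, rfl⟩
    have key2 : ∀ u ∈ T, ∃ (s : MvPolynomial (Fin (m'+1)) (ZMod p)) (c : ZMod p),
        s ∈ S ∧ s ∉ V j ∧ c ≠ 0 ∧ w j - u = c • s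
        ∧ ∀ s', s' ∈ S → (∃ c' : ZMod p, w j - u = c' • s') → s' = s := by
      intro u hu
      have huV : u ∈ V j := (hmemT u).1 hu
      have hx1 : w j - u ∈ Submodule.span (ZMod p)
          (Set.range fun i => linForm p (m'+1) (v i)) :=
        Submodule.sub_mem _ hwjW (hWmem u huV)
      have hx0 : w j - u ≠ 0 := by
        intro h
        apply hwj
        have h2 : w j = u := by rwa [sub_eq_zero] at h
        rw [h2]; exact huV
      obtain ⟨s, ⟨hsS, c, hcs⟩, huniq⟩ := hS.2 _ hx1 hx0
      have hc0 : c ≠ 0 := by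
        rintro rfl
        rw [zero_smul] at hcs
        exact hx0 hcs
      have hsV : s ∉ V j := by
        intro hsV
        apply hwj
        have h3 : w j = c • s + u := by rw [← hcs]; ring
        rw [h3]
        exact Submodule.add_mem _ (Submodule.smul_mem _ _ hsV) huV
      exact ⟨s, c, hsS, hsV, hc0, hcs, fun s' hs' hc' => huniq s' ⟨hs', hc'⟩⟩
    choose r c hrS hrV hc0 hrc huniq using key2
    have hprod : ∏ x ∈ T, (w j - x)
        = MvPolynomial.C (∏ u ∈ T.attach, c u.1 u.2)
          * ∏ x ∈ S.filter (fun x => x ∉ V j), x := by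
      rw [← Finset.prod_attach T (fun x => w j - x)]
      have hcr : ∀ u : {x // x ∈ T}, w j - u.1
          = MvPolynomial.C (c u.1 u.2) * r u.1 u.2 := by
        intro u; rw [hrc u.1 u.2, MvPolynomial.smul_eq_C_mul]
      rw [Finset.prod_congr rfl (fun u _ => hcr u), Finset.prod_mul_distrib, map_prod]
      congr 1
      refine Finset.prod_bij (fun u _ => r u.1 u.2) ?_ ?_ ?_ ?_
      · intro u _
        rw [Finset.mem_filter]
        exact ⟨hrS u.1 u.2, hrV u.1 u.2⟩
      · intro u1 _ u2 _ heq
        have heq' : r u1.1 u1.2 = r u2.1 u2.2 := heq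
        have h1 := hrc u1.1 u1.2
        have h2 := hrc u2.1 u2.2
        rw [heq'] at h1
        by_cases hcc : c u1.1 u1.2 = c u2.1 u2.2
        · apply Subtype.ext
          rw [hcc] at h1
          have h4 : w j - u1.1 = w j - u2.1 := by rw [h1, h2]
          exact sub_right_inj.mp h4
        · exfalso
          apply hrV u2.1 u2.2
          have hd : (c u1.1 u1.2 - c u2.1 u2.2) • r u2.1 u2.2 = u2.1 - u1.1 := by
            rw [sub_smul, ← h1, ← h2]; ring
          have h5 : r u2.1 u2.2 = (c u1.1 u1.2 - c u2.1 u2.2)⁻¹ • (u2.1 - u1.1) := by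
            rw [← hd, smul_smul, inv_mul_cancel₀ (sub_ne_zero.mpr hcc), one_smul]
          rw [h5]
          exact Submodule.smul_mem _ _
            (Submodule.sub_mem _ ((hmemT _).1 u2.2) ((hmemT _).1 u1.2))
      · intro s hs
        rw [Finset.mem_filter] at hs
        obtain ⟨hsS, hsV⟩ := hs
        have hsW : s ∈ Submodule.span (ZMod p)
            (Set.range fun i => linForm p (m'+1) (v i)) := (hS.1 s hsS).1
        have hrange : (Set.range fun i => linForm p (m'+1) (v i))
            = insert (w j) (w '' {i | i ≠ j}) := by
          ext x
          constructor
          · rintro ⟨i, rfl⟩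
            by_cases hij : i = j
            · subst hij; exact Set.mem_insert _ _
            · exact Set.mem_insert_of_mem _ ⟨i, hij, rfl⟩
          · rintro (rfl | ⟨i, hi, rfl⟩)
            · exact ⟨j, rfl⟩
            · exact ⟨i, rfl⟩
        rw [hrange, Submodule.mem_span_insert] at hsW
        obtain ⟨d, y, hy, hsd⟩ := hsW
        have hyV : y ∈ V j := by rw [hV]; exact hy
        have hd0 : d ≠ 0 := by
          rintro rfl
          apply hsV
          rw [zero_smul, zero_add] at hsd
          rw [hsd]; exact hyV
        have huV : w j - d⁻¹ • s ∈ V j := by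
          have h6 : w j - d⁻¹ • s = -(d⁻¹ • y) := by
            rw [hsd, smul_add, smul_smul, inv_mul_cancel₀ hd0, one_smul,
              sub_add_cancel_left]
          rw [h6]
          exact Submodule.neg_mem _ (Submodule.smul_mem _ _ hyV)
        have huT : w j - d⁻¹ • s ∈ T := (hmemT _).2 huV
        refine ⟨⟨_, huT⟩, Finset.mem_attach _ _, ?_⟩
        exact (huniq _ huT s hsS ⟨d⁻¹, by rw [sub_sub_cancel]⟩).symm
      · intro u _; rfl
    set γ : ZMod p := ∏ u ∈ T.attach, c u.1 u.2 with hγ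
    have hγ0 : γ ≠ 0 := Finset.prod_ne_zero_iff.2 (fun u _ => hc0 u.1 u.2)
    refine ⟨fun k => MvPolynomial.C γ⁻¹ * a k, fun i => ?_⟩
    have hsum : ∑ k : Fin (m'+1), (MvPolynomial.C γ⁻¹ * a k) * (w i) ^ p ^ (k : ℕ)
        = MvPolynomial.C γ⁻¹ * ∏ x ∈ T, (w i - x) := by
      rw [ha (w i), Finset.mul_sum]
      exact Finset.sum_congr rfl fun k _ => by ring
    by_cases hij : i = j
    · subst hij
      rw [if_pos rfl, hsum, hprod, ← mul_assoc, ← map_mul,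
        inv_mul_cancel₀ hγ0, map_one, one_mul]
    · rw [if_neg hij, hsum]
      have h7 : ∏ x ∈ T, (w i - x) = 0 :=
        Finset.prod_eq_zero ((hmemT _).2 (hwmem i hij)) (sub_self _)
      rw [h7, mul_zero]
  choose U hU using key
  refine ⟨Matrix.of U, Matrix.ext fun i j => ?_⟩
  rw [Matrix.mul_apply, Matrix.diagonal_apply]
  simp only [Matrix.of_apply]
  rw [hU i j]
  by_cases h : i = j
  · subst h
    simp [hV]
  · simp [h, Ne.symm h]
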